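/- The maximum of two subsolutions of the infinity fractional Laplacian in an open set Ω is a subsolution: if u₁, u₂ are upper semicontinuous bounded functions with Δ^s_∞ u₁ ≥ 0 and Δ^s_∞ u₂ ≥ 0 in Ω in the viscosity sense, then w = max(u₁, u₂) satisfies Δ^s_∞ w ≥ 0 in Ω in the viscosity sense. -/

import Mathlib

set_option maxHeartbeats 1000000


open MeasureTheory Metric Set Real
open scoped Classical

noncomputable section

variable {N : ℕ}

/-- `φ` is `C^{1,1}` at `x₀` with (unique) gradient vector `p`. -/
def C11At (φ : EuclideanSpace ℝ (Fin N) → ℝ) (x₀ p : EuclideanSpace ℝ (Fin N)) : Prop :=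
  ∃ M η₀ : ℝ, 0 < M ∧ 0 < η₀ ∧ ∀ x : EuclideanSpace ℝ (Fin N), ‖x‖ < η₀ →
    |φ (x₀ + x) - φ x₀ - (inner ℝ p x : ℝ)| ≤ M * ‖x‖ ^ 2

/-- The one-sided integral `L(u,v,x) = ∫₀^∞ (u(x+ηv)-u(x))/η^{1+2s} dη`. -/
def halfInt (s : ℝ) (u : EuclideanSpace ℝ (Fin N) → ℝ) (x v : EuclideanSpace ℝ (Fin N)) : ℝ :=
  ∫ η in Set.Ioi (0 : ℝ), (u (x + η • v) - u x) / η ^ (1 + 2 * s)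

/-- The two-sided (second difference) integral in direction `v`. -/
def dirInt (s : ℝ) (u : EuclideanSpace ℝ (Fin N) → ℝ) (x v : EuclideanSpace ℝ (Fin N)) : ℝ :=
  ∫ η in Set.Ioi (0 : ℝ), (u (x + η • v) + u (x - η • v) - 2 * u x) / η ^ (1 + 2 * s)

/-- The infinity fractional Laplacian of `u` at `x`, where `p` plays the role of `∇u(x)`. -/
def IFL (s : ℝ) (u : EuclideanSpace ℝ (Fin N) → ℝ) (x p : EuclideanSpace ℝ (Fin N)) : ℝ :=
  if p = 0 then
    (⨆ y : Metric.sphere (0 : EuclideanSpace ℝ (Fin N)) 1,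
        halfInt s u x (y : EuclideanSpace ℝ (Fin N))) +
      (⨅ z : Metric.sphere (0 : EuclideanSpace ℝ (Fin N)) 1,
        halfInt s u x (-(z : EuclideanSpace ℝ (Fin N))))
  else dirInt s u x (‖p‖⁻¹ • p)

/-- Replacement of `u` by the test function `φ` inside `B_r(x₀)`. -/
def glue (u φ : EuclideanSpace ℝ (Fin N) → ℝ) (x₀ : EuclideanSpace ℝ (Fin N)) (r : ℝ) :
    EuclideanSpace ℝ (Fin N) → ℝ :=
  fun x => if x ∈ Metric.ball x₀ r then φ x else u x

/-- `u` is a viscosity subsolution of `Δ^s_∞ u = 0` at every point of `Ω`. -/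
def IsSubsol (s : ℝ) (Ω : Set (EuclideanSpace ℝ (Fin N)))
    (u : EuclideanSpace ℝ (Fin N) → ℝ) : Prop :=
  ∀ x₀ ∈ Ω, ∀ r > (0 : ℝ), ∀ φ : EuclideanSpace ℝ (Fin N) → ℝ,
    ∀ p : EuclideanSpace ℝ (Fin N),
    C11At φ x₀ p → ContinuousOn φ (Metric.closedBall x₀ r) → φ x₀ = u x₀ →
    (∀ x ∈ Metric.ball x₀ r, x ≠ x₀ → u x < φ x) →
    0 ≤ IFL s (glue u φ x₀ r) x₀ p

/-- `u` is a viscosity supersolution of `Δ^s_∞ u = 0` at every point of `Ω`. -/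
def IsSupersol (s : ℝ) (Ω : Set (EuclideanSpace ℝ (Fin N)))
    (u : EuclideanSpace ℝ (Fin N) → ℝ) : Prop :=
  ∀ x₀ ∈ Ω, ∀ r > (0 : ℝ), ∀ φ : EuclideanSpace ℝ (Fin N) → ℝ,
    ∀ p : EuclideanSpace ℝ (Fin N),
    C11At φ x₀ p → ContinuousOn φ (Metric.closedBall x₀ r) → φ x₀ = u x₀ →
    (∀ x ∈ Metric.ball x₀ r, x ≠ x₀ → φ x < u x) →
    IFL s (glue u φ x₀ r) x₀ p ≤ 0

/-- `u` is a viscosity subsolution at nonzero-gradient points in `Ω`. -/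
def IsSubsolNZ (s : ℝ) (Ω : Set (EuclideanSpace ℝ (Fin N)))
    (u : EuclideanSpace ℝ (Fin N) → ℝ) : Prop :=
  ∀ x₀ ∈ Ω, ∀ r > (0 : ℝ), ∀ φ : EuclideanSpace ℝ (Fin N) → ℝ,
    ∀ p : EuclideanSpace ℝ (Fin N), p ≠ 0 →
    C11At φ x₀ p → ContinuousOn φ (Metric.closedBall x₀ r) → φ x₀ = u x₀ →
    (∀ x ∈ Metric.ball x₀ r, x ≠ x₀ → u x < φ x) →
    0 ≤ dirInt s (glue u φ x₀ r) x₀ (‖p‖⁻¹ • p)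

/-- `u` is a viscosity supersolution at nonzero-gradient points in `Ω`. -/
def IsSupersolNZ (s : ℝ) (Ω : Set (EuclideanSpace ℝ (Fin N)))
    (u : EuclideanSpace ℝ (Fin N) → ℝ) : Prop :=
  ∀ x₀ ∈ Ω, ∀ r > (0 : ℝ), ∀ φ : EuclideanSpace ℝ (Fin N) → ℝ,
    ∀ p : EuclideanSpace ℝ (Fin N), p ≠ 0 →
    C11At φ x₀ p → ContinuousOn φ (Metric.closedBall x₀ r) → φ x₀ = u x₀ →
    (∀ x ∈ Metric.ball x₀ r, x ≠ x₀ → φ x < u x) →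
    dirInt s (glue u φ x₀ r) x₀ (‖p‖⁻¹ • p) ≤ 0

lemma aesm_div {f g : ℝ → ℝ} {μ : MeasureTheory.Measure ℝ}
    (h1 : MeasureTheory.AEStronglyMeasurable f μ)
    (h2 : MeasureTheory.AEStronglyMeasurable g μ) :
    MeasureTheory.AEStronglyMeasurable (fun x => f x / g x) μ := by
  rw [aestronglyMeasurable_iff_aemeasurable] at h1 h2 ⊢
  exact h1.div h2

/-- majorant for the integrands -/
def maj (s δ r M C : ℝ) : ℝ → ℝ := fun η =>
  if η < r then M * η ^ (1 - 2*s) + C * δ ^ (-(1+2*s)) else C * η ^ (-(1+2*s))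

lemma maj_integrable {s δ r M C : ℝ} (hs : 1/2 < s) (hs1 : s < 1) (hδ : 0 < δ) (hr : 0 < r) :
    IntegrableOn (maj s δ r M C) (Ioi 0) := by
  have h1 : IntegrableOn (fun η : ℝ => M * η ^ (1-2*s) + C * δ ^ (-(1+2*s))) (Ioo 0 r) := by
    apply Integrable.add
    · exact MeasureTheory.IntegrableOn.mono_set
        (((intervalIntegral.intervalIntegrable_rpow'
        (by linarith : (-1:ℝ) < 1-2*s)).1).const_mul M) Ioo_subset_Ioc_self
    · exact integrableOn_const measure_Ioo_lt_top.ne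
  have h2 : IntegrableOn (fun η : ℝ => C * η ^ (-(1+2*s))) (Ici r) := by
    rw [integrableOn_Ici_iff_integrableOn_Ioi]
    exact (integrableOn_Ioi_rpow_of_lt (by linarith) hr).const_mul C
  have e1 : IntegrableOn (maj s δ r M C) (Ioo 0 r) :=
    h1.congr_fun (fun η hη => by simp [maj, hη.2]) measurableSet_Ioo
  have e2 : IntegrableOn (maj s δ r M C) (Ici r) :=
    h2.congr_fun (fun η hη => by simp [maj, not_lt.2 (mem_Ici.1 hη)]) measurableSet_Ici
  exact (e1.union e2).mono_set (fun η hη => by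
    rcases lt_or_ge η r with h | h
    · exact Or.inl ⟨hη, h⟩
    · exact Or.inr h)

lemma master {s δ r M C : ℝ} (hs : 1/2 < s) (hs1 : s < 1) (hδ : 0 < δ) (hδr : δ < r)
    (hM : 0 ≤ M) (hC : 0 ≤ C) (num : ℝ → ℝ)
    (hcont : ContinuousOn num (Ioo 0 r))
    (hmeas : AEStronglyMeasurable num (volume.restrict (Ici r)))
    (hnear : ∀ η ∈ Ioo (0:ℝ) δ, |num η| ≤ M * η^2)
    (hbdd : ∀ η : ℝ, 0 < η → |num η| ≤ C) :
    IntegrableOn (fun η => num η / η ^ (1+2*s)) (Ioi 0) ∧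
    |∫ η in Ioi (0:ℝ), num η / η ^ (1+2*s)| ≤ ∫ η in Ioi (0:ℝ), maj s δ r M C η := by
  have hr : 0 < r := hδ.trans hδr
  have hptwise : ∀ η ∈ Ioi (0:ℝ), |num η / η ^ (1+2*s)| ≤ maj s δ r M C η := by
    intro η hη
    have hηpos : (0:ℝ) < η := hη
    have hpow : (0:ℝ) < η ^ (1+2*s) := Real.rpow_pos_of_pos hηpos _
    rw [abs_div, abs_of_pos hpow]
    by_cases hlt : η < r
    · simp only [maj, if_pos hlt]
      by_cases hδc : η < δ
      · have h1 := hnear η ⟨hηpos, hδc⟩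
        have key : M * η^2 / η ^ (1+2*s) = M * η ^ (1-2*s) := by
          rw [mul_div_assoc]
          congr 1
          rw [show (η:ℝ)^2 = η ^ ((2:ℕ):ℝ) by rw [Real.rpow_natCast],
            ← Real.rpow_sub hηpos]
          congr 1
          push_cast
          ring
        calc |num η| / η ^ (1+2*s) ≤ M * η^2 / η ^ (1+2*s) := by gcongr
          _ = M * η ^ (1-2*s) := key
          _ ≤ M * η ^ (1-2*s) + C * δ ^ (-(1+2*s)) :=
            le_add_of_nonneg_right (mul_nonneg hC (Real.rpow_nonneg hδ.le _))
      · push_neg at hδc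
        have h2 : |num η| / η ^ (1+2*s) ≤ C / η ^ (1+2*s) := by
          gcongr; exact hbdd η hηpos
        have h3 : C / η ^ (1+2*s) ≤ C * δ ^ (-(1+2*s)) := by
          rw [div_eq_mul_inv, ← Real.rpow_neg hηpos.le]
          exact mul_le_mul_of_nonneg_left
            (Real.rpow_le_rpow_of_nonpos hδ hδc (by linarith)) hC
        refine (h2.trans h3).trans (le_add_of_nonneg_left
          (mul_nonneg hM (Real.rpow_nonneg hηpos.le _)))
    · simp only [maj, if_neg hlt]
      rw [div_eq_mul_inv, ← Real.rpow_neg hηpos.le]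
      exact mul_le_mul_of_nonneg_right (hbdd η hηpos) (Real.rpow_nonneg hηpos.le _)
  have hcover : Ioi (0:ℝ) ⊆ Ioo 0 r ∪ Ici r := fun η hη => by
    rcases lt_or_ge η r with h | h
    · exact Or.inl ⟨hη, h⟩
    · exact Or.inr h
  have hrpow : Continuous fun η : ℝ => η ^ (1+2*s) :=
    Real.continuous_rpow_const (by linarith)
  have hint1 : IntegrableOn (fun η => num η / η ^ (1+2*s)) (Ioo 0 r) := by
    refine Integrable.mono' (MeasureTheory.IntegrableOn.mono_set
      (maj_integrable (M:=M) (C:=C) hs hs1 hδ hr) Ioo_subset_Ioi_self)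
      (aesm_div (hcont.aestronglyMeasurable measurableSet_Ioo)
        hrpow.aestronglyMeasurable) ?_
    filter_upwards [self_mem_ae_restrict measurableSet_Ioo] with η hη
    rw [Real.norm_eq_abs]; exact hptwise η hη.1
  have hint2 : IntegrableOn (fun η => num η / η ^ (1+2*s)) (Ici r) := by
    refine Integrable.mono' (MeasureTheory.IntegrableOn.mono_set
      (maj_integrable (M:=M) (C:=C) hs hs1 hδ hr) (fun η hη => lt_of_lt_of_le hr hη))
      (aesm_div hmeas hrpow.aestronglyMeasurable) ?_
    filter_upwards [self_mem_ae_restrict measurableSet_Ici] with η hη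
    rw [Real.norm_eq_abs]; exact hptwise η (lt_of_lt_of_le hr hη)
  have hint : IntegrableOn (fun η => num η / η ^ (1+2*s)) (Ioi 0) :=
    MeasureTheory.IntegrableOn.mono_set (hint1.union hint2) hcover
  refine ⟨hint, ?_⟩
  calc |∫ η in Ioi (0:ℝ), num η / η ^ (1+2*s)|
      ≤ ∫ η in Ioi (0:ℝ), |num η / η ^ (1+2*s)| := by
        simpa only [Real.norm_eq_abs] using
          norm_integral_le_integral_norm (μ := volume.restrict (Ioi 0))
            (fun η => num η / η ^ (1+2*s))
    _ ≤ ∫ η in Ioi (0:ℝ), maj s δ r M C η :=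
        setIntegral_mono_on hint.abs (maj_integrable hs hs1 hδ hr) measurableSet_Ioi hptwise

variable {N : ℕ}

lemma glue_add_mem (u φ : EuclideanSpace ℝ (Fin N) → ℝ) (x₀ a : EuclideanSpace ℝ (Fin N))
    (r : ℝ) (h : ‖a‖ < r) : glue u φ x₀ r (x₀ + a) = φ (x₀ + a) := by
  have : x₀ + a ∈ Metric.ball x₀ r := by
    rw [Metric.mem_ball, dist_eq_norm, add_sub_cancel_left]; exact h
  simp [glue, this]

lemma glue_add_not_mem (u φ : EuclideanSpace ℝ (Fin N) → ℝ) (x₀ a : EuclideanSpace ℝ (Fin N))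
    (r : ℝ) (h : r ≤ ‖a‖) : glue u φ x₀ r (x₀ + a) = u (x₀ + a) := by
  have : x₀ + a ∉ Metric.ball x₀ r := by
    rw [Metric.mem_ball, dist_eq_norm, add_sub_cancel_left]; exact not_lt.2 h
  simp [glue, this]

lemma glue_self (u φ : EuclideanSpace ℝ (Fin N) → ℝ) (x₀ : EuclideanSpace ℝ (Fin N))
    (r : ℝ) (hr : 0 < r) : glue u φ x₀ r x₀ = φ x₀ := by
  simp [glue, Metric.mem_ball, hr]

lemma glue_le (u w φ : EuclideanSpace ℝ (Fin N) → ℝ) (x₀ : EuclideanSpace ℝ (Fin N))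
    (r : ℝ) (hle : ∀ x, u x ≤ w x) (x : EuclideanSpace ℝ (Fin N)) :
    glue u φ x₀ r x ≤ glue w φ x₀ r x := by
  by_cases h : x ∈ Metric.ball x₀ r <;> simp [glue, h, hle x]

lemma glue_abs_le (u φ : EuclideanSpace ℝ (Fin N) → ℝ) (x₀ : EuclideanSpace ℝ (Fin N))
    (r K Cφ : ℝ) (huK : ∀ x, |u x| ≤ K)
    (hφb : ∀ x ∈ Metric.ball x₀ r, |φ x| ≤ Cφ) (x : EuclideanSpace ℝ (Fin N)) :
    |glue u φ x₀ r x| ≤ max K Cφ := by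
  by_cases h : x ∈ Metric.ball x₀ r
  · simp only [glue, if_pos h]
    exact le_trans (hφb x h) (le_max_right _ _)
  · simp only [glue, if_neg h]
    exact le_trans (huK x) (le_max_left _ _)

lemma line_cont (x₀ v : EuclideanSpace ℝ (Fin N)) :
    Continuous fun η : ℝ => x₀ + η • v :=
  continuous_const.add (continuous_id.smul continuous_const)

lemma norm_eta_smul (v : EuclideanSpace ℝ (Fin N)) (hv : ‖v‖ = 1) (η : ℝ) (hη : 0 ≤ η) :
    ‖η • v‖ = η := by rw [norm_smul, hv, mul_one, Real.norm_eq_abs, abs_of_nonneg hη]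

/-- Integrability and bound for the halfInt integrand of a glued function. -/
lemma halfInt_aux (s : ℝ) (hs : 1/2 < s) (hs1 : s < 1)
    (x₀ : EuclideanSpace ℝ (Fin N)) (r δ M Cφ K : ℝ)
    (hr : 0 < r) (hδ : 0 < δ) (hδr : δ < r) (hM : 0 ≤ M)
    (φ : EuclideanSpace ℝ (Fin N) → ℝ)
    (hφc : ContinuousOn φ (Metric.closedBall x₀ r))
    (hφb : ∀ x ∈ Metric.ball x₀ r, |φ x| ≤ Cφ)
    (hφnear : ∀ x : EuclideanSpace ℝ (Fin N), ‖x‖ < δ → |φ (x₀ + x) - φ x₀| ≤ M * ‖x‖ ^ 2)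
    (u : EuclideanSpace ℝ (Fin N) → ℝ) (hu : Measurable u) (huK : ∀ x, |u x| ≤ K)
    (v : EuclideanSpace ℝ (Fin N)) (hv : ‖v‖ = 1) :
    IntegrableOn (fun η : ℝ =>
      (glue u φ x₀ r (x₀ + η • v) - glue u φ x₀ r x₀) / η ^ (1 + 2 * s)) (Ioi 0) ∧
    |halfInt s (glue u φ x₀ r) x₀ v| ≤
      ∫ η in Ioi (0:ℝ), maj s δ r M (2 * max K Cφ) η := by
  set g := glue u φ x₀ r with hg
  have hgx₀ : g x₀ = φ x₀ := glue_self u φ x₀ r hr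
  have hgb : ∀ x, |g x| ≤ max K Cφ := glue_abs_le u φ x₀ r K Cφ huK hφb
  have hnum := master (num := fun η : ℝ => g (x₀ + η • v) - g x₀) hs hs1 hδ hδr hM
    (by
      have : (0:ℝ) ≤ K := (abs_nonneg (u x₀)).trans (huK x₀)
      have : (0:ℝ) ≤ max K Cφ := this.trans (le_max_left _ _)
      linarith : (0:ℝ) ≤ 2 * max K Cφ) ?_ ?_ ?_ ?_
  · exact ⟨hnum.1, hnum.2⟩
  · -- continuity on Ioo 0 r
    have h1 : ∀ η ∈ Ioo (0:ℝ) r, g (x₀ + η • v) - g x₀ = φ (x₀ + η • v) - φ x₀ := by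
      intro η hη
      rw [hgx₀, hg, glue_add_mem u φ x₀ _ r (by rw [norm_eta_smul v hv η hη.1.le]; exact hη.2)]
    refine ContinuousOn.congr ?_ h1
    refine ContinuousOn.sub ?_ continuousOn_const
    refine hφc.comp (line_cont x₀ v).continuousOn ?_
    intro η hη
    exact Metric.ball_subset_closedBall (by
      rw [Metric.mem_ball, dist_eq_norm, add_sub_cancel_left,
        norm_eta_smul v hv η hη.1.le]; exact hη.2)
  · -- AESM on Ici r
    have h2 : ∀ η ∈ Ici r, g (x₀ + η • v) - g x₀ = u (x₀ + η • v) - φ x₀ := by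
      intro η hη
      rw [hgx₀, hg, glue_add_not_mem u φ x₀ _ r
        (by rw [norm_eta_smul v hv η (hr.le.trans hη)]; exact hη)]
    refine AEStronglyMeasurable.congr (f := fun η : ℝ => u (x₀ + η • v) - φ x₀) ?_ ?_
    · exact ((hu.comp (line_cont x₀ v).measurable).sub measurable_const).aestronglyMeasurable
    · filter_upwards [self_mem_ae_restrict measurableSet_Ici] with η hη
      exact (h2 η hη).symm
  · -- near bound
    intro η hη
    have hball : ‖η • v‖ < δ := by rw [norm_eta_smul v hv η hη.1.le]; exact hη.2
    simp only [hgx₀, hg]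
    rw [glue_add_mem u φ x₀ _ r (hball.trans hδr), glue_self u φ x₀ r hr]
    have := hφnear (η • v) hball
    rwa [norm_eta_smul v hv η hη.1.le] at this
  · -- global bound
    intro η hη
    calc |g (x₀ + η • v) - g x₀| ≤ |g (x₀ + η • v)| + |g x₀| := abs_sub _ _
      _ ≤ max K Cφ + max K Cφ := add_le_add (hgb _) (hgb _)
      _ = 2 * max K Cφ := by ring

lemma line_cont' (x₀ v : EuclideanSpace ℝ (Fin N)) :
    Continuous fun η : ℝ => x₀ - η • v :=
  continuous_const.sub (continuous_id.smul continuous_const)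

/-- Integrability and bound for the dirInt integrand of a glued function. -/
lemma dirInt_aux (s : ℝ) (hs : 1/2 < s) (hs1 : s < 1)
    (x₀ : EuclideanSpace ℝ (Fin N)) (r δ M Cφ K : ℝ)
    (hr : 0 < r) (hδ : 0 < δ) (hδr : δ < r) (hM : 0 ≤ M)
    (φ : EuclideanSpace ℝ (Fin N) → ℝ)
    (hφc : ContinuousOn φ (Metric.closedBall x₀ r))
    (hφb : ∀ x ∈ Metric.ball x₀ r, |φ x| ≤ Cφ)
    (hφnear : ∀ x : EuclideanSpace ℝ (Fin N), ‖x‖ < δ →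
      |φ (x₀ + x) + φ (x₀ - x) - 2 * φ x₀| ≤ M * ‖x‖ ^ 2)
    (u : EuclideanSpace ℝ (Fin N) → ℝ) (hu : Measurable u) (huK : ∀ x, |u x| ≤ K)
    (v : EuclideanSpace ℝ (Fin N)) (hv : ‖v‖ = 1) :
    IntegrableOn (fun η : ℝ =>
      (glue u φ x₀ r (x₀ + η • v) + glue u φ x₀ r (x₀ - η • v)
        - 2 * glue u φ x₀ r x₀) / η ^ (1 + 2 * s)) (Ioi 0) := by
  set g := glue u φ x₀ r with hg
  have hgx₀ : g x₀ = φ x₀ := glue_self u φ x₀ r hr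
  have hgb : ∀ x, |g x| ≤ max K Cφ := glue_abs_le u φ x₀ r K Cφ huK hφb
  have hsub : ∀ η : ℝ, x₀ - η • v = x₀ + (-(η • v)) := fun η => by
    rw [sub_eq_add_neg]
  have hnormneg : ∀ η : ℝ, ‖-(η • v)‖ = ‖η • v‖ := fun η => norm_neg _
  have hnum := master (num := fun η : ℝ => g (x₀ + η • v) + g (x₀ - η • v) - 2 * g x₀)
    hs hs1 hδ hδr hM
    (by
      have : (0:ℝ) ≤ K := (abs_nonneg (u x₀)).trans (huK x₀)
      have : (0:ℝ) ≤ max K Cφ := this.trans (le_max_left _ _)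
      linarith : (0:ℝ) ≤ 4 * max K Cφ) ?_ ?_ ?_ ?_
  · exact hnum.1
  · -- continuity on Ioo 0 r
    have h1 : ∀ η ∈ Ioo (0:ℝ) r, g (x₀ + η • v) + g (x₀ - η • v) - 2 * g x₀
        = φ (x₀ + η • v) + φ (x₀ - η • v) - 2 * φ x₀ := by
      intro η hη
      have hn : ‖η • v‖ < r := by rw [norm_eta_smul v hv η hη.1.le]; exact hη.2
      rw [hgx₀, hg, glue_add_mem u φ x₀ _ r hn, hsub η,
        glue_add_mem u φ x₀ _ r (by rw [hnormneg]; exact hn)]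
    refine ContinuousOn.congr ?_ h1
    have hmem : ∀ z : EuclideanSpace ℝ (Fin N), ‖z‖ < r →
        x₀ + z ∈ Metric.closedBall x₀ r := by
      intro z hz
      exact Metric.ball_subset_closedBall (by
        rw [Metric.mem_ball, dist_eq_norm, add_sub_cancel_left]; exact hz)
    refine ContinuousOn.sub (ContinuousOn.add ?_ ?_) continuousOn_const
    · refine hφc.comp (line_cont x₀ v).continuousOn ?_
      intro η hη
      exact hmem _ (by rw [norm_eta_smul v hv η hη.1.le]; exact hη.2)
    · refine hφc.comp (line_cont' x₀ v).continuousOn ?_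
      intro η hη
      show x₀ - η • v ∈ Metric.closedBall x₀ r
      rw [hsub η]
      exact hmem _ (by rw [hnormneg, norm_eta_smul v hv η hη.1.le]; exact hη.2)
  · -- AESM on Ici r
    have h2 : ∀ η ∈ Ici r, g (x₀ + η • v) + g (x₀ - η • v) - 2 * g x₀
        = u (x₀ + η • v) + u (x₀ - η • v) - 2 * φ x₀ := by
      intro η hη
      have hn : r ≤ ‖η • v‖ := by rw [norm_eta_smul v hv η (hr.le.trans hη)]; exact hη
      rw [hgx₀, hg, glue_add_not_mem u φ x₀ _ r hn, hsub η,
        glue_add_not_mem u φ x₀ _ r (by rw [hnormneg]; exact hn), ← hsub η]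
    refine AEStronglyMeasurable.congr
      (f := fun η : ℝ => u (x₀ + η • v) + u (x₀ - η • v) - 2 * φ x₀) ?_ ?_
    · exact (((hu.comp (line_cont x₀ v).measurable).add
        (hu.comp (line_cont' x₀ v).measurable)).sub measurable_const).aestronglyMeasurable
    · filter_upwards [self_mem_ae_restrict measurableSet_Ici] with η hη
      exact (h2 η hη).symm
  · -- near bound
    intro η hη
    have hball : ‖η • v‖ < δ := by rw [norm_eta_smul v hv η hη.1.le]; exact hη.2
    simp only [hgx₀, hg]
    rw [glue_add_mem u φ x₀ _ r (hball.trans hδr), hsub η,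
      glue_add_mem u φ x₀ _ r (by rw [hnormneg]; exact hball.trans hδr),
      glue_self u φ x₀ r hr, ← hsub η]
    have := hφnear (η • v) hball
    rwa [norm_eta_smul v hv η hη.1.le] at this
  · -- global bound
    intro η hη
    have h3 : |g (x₀ + η • v) + g (x₀ - η • v) - 2 * g x₀|
        ≤ |g (x₀ + η • v)| + |g (x₀ - η • v)| + 2 * |g x₀| := by
      calc |g (x₀ + η • v) + g (x₀ - η • v) - 2 * g x₀|
          ≤ |g (x₀ + η • v) + g (x₀ - η • v)| + |2 * g x₀| := abs_sub _ _
        _ ≤ |g (x₀ + η • v)| + |g (x₀ - η • v)| + 2 * |g x₀| := by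
            rw [abs_mul, abs_two]
            exact add_le_add (abs_add_le _ _) le_rfl
    refine h3.trans ?_
    have b1 := hgb (x₀ + η • v); have b2 := hgb (x₀ - η • v); have b3 := hgb x₀
    linarith

lemma key (s : ℝ) (hs : 1/2 < s) (hs1 : s < 1)
    (x₀ : EuclideanSpace ℝ (Fin N)) (r : ℝ) (hr : 0 < r)
    (φ : EuclideanSpace ℝ (Fin N) → ℝ) (p : EuclideanSpace ℝ (Fin N))
    (hC11 : C11At φ x₀ p) (hφc : ContinuousOn φ (Metric.closedBall x₀ r))
    (u w : EuclideanSpace ℝ (Fin N) → ℝ) (hu : Measurable u) (hw : Measurable w)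
    (K : ℝ) (huK : ∀ x, |u x| ≤ K) (hwK : ∀ x, |w x| ≤ K)
    (hle : ∀ x, u x ≤ w x) (heq : u x₀ = w x₀)
    (h : 0 ≤ IFL s (glue u φ x₀ r) x₀ p) : 0 ≤ IFL s (glue w φ x₀ r) x₀ p := by
  obtain ⟨M, η₀, hM, hη₀, hφM⟩ := hC11
  set δ : ℝ := min η₀ r / 2 with hδdef
  have hδ : 0 < δ := by positivity
  have hδr : δ < r := by
    have := min_le_right η₀ r; rw [hδdef]; linarith
  have hδη₀ : δ < η₀ := by
    have := min_le_left η₀ r; rw [hδdef]; linarith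
  obtain ⟨Cφ, hCφ⟩ := (isCompact_closedBall x₀ r).exists_bound_of_continuousOn hφc
  have hφb : ∀ x ∈ Metric.ball x₀ r, |φ x| ≤ Cφ := fun x hx => by
    simpa [Real.norm_eq_abs] using hCφ x (Metric.ball_subset_closedBall hx)
  by_cases hp : p = 0
  · -- zero gradient case
    subst hp
    have hφnear : ∀ x : EuclideanSpace ℝ (Fin N), ‖x‖ < δ →
        |φ (x₀ + x) - φ x₀| ≤ M * ‖x‖ ^ 2 := by
      intro x hx
      have := hφM x (hx.trans hδη₀)
      simpa using this
    have auxu := fun (v : EuclideanSpace ℝ (Fin N)) (hv : ‖v‖ = 1) =>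
      halfInt_aux s hs hs1 x₀ r δ M Cφ K hr hδ hδr hM.le φ hφc hφb hφnear u hu huK v hv
    have auxw := fun (v : EuclideanSpace ℝ (Fin N)) (hv : ‖v‖ = 1) =>
      halfInt_aux s hs hs1 x₀ r δ M Cφ K hr hδ hδr hM.le φ hφc hφb hφnear w hw hwK v hv
    have hmono : ∀ (v : EuclideanSpace ℝ (Fin N)), ‖v‖ = 1 →
        halfInt s (glue u φ x₀ r) x₀ v ≤ halfInt s (glue w φ x₀ r) x₀ v := by
      intro v hv
      simp only [halfInt]
      refine setIntegral_mono_on (auxu v hv).1 (auxw v hv).1 measurableSet_Ioi ?_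
      intro η hη
      have hpow : (0:ℝ) < η ^ (1+2*s) := Real.rpow_pos_of_pos hη _
      have hnum : glue u φ x₀ r (x₀ + η • v) - glue u φ x₀ r x₀
          ≤ glue w φ x₀ r (x₀ + η • v) - glue w φ x₀ r x₀ := by
        rw [glue_self u φ x₀ r hr, glue_self w φ x₀ r hr]
        exact sub_le_sub_right (glue_le u w φ x₀ r hle _) _
      exact div_le_div_of_nonneg_right hnum hpow.le
    set B : ℝ := ∫ η in Ioi (0:ℝ), maj s δ r M (2 * max K Cφ) η with hB
    have hnorm : ∀ y : Metric.sphere (0 : EuclideanSpace ℝ (Fin N)) 1,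
        ‖(y : EuclideanSpace ℝ (Fin N))‖ = 1 := fun y => by
      simpa using mem_sphere_zero_iff_norm.1 y.2
    have hnormneg : ∀ y : Metric.sphere (0 : EuclideanSpace ℝ (Fin N)) 1,
        ‖(-(y : EuclideanSpace ℝ (Fin N)))‖ = 1 := fun y => by
      rw [norm_neg]; exact hnorm y
    simp only [IFL, eq_self_iff_true, if_true] at h ⊢
    have hsup : (⨆ y : Metric.sphere (0 : EuclideanSpace ℝ (Fin N)) 1,
        halfInt s (glue u φ x₀ r) x₀ (y : EuclideanSpace ℝ (Fin N))) ≤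
        ⨆ y : Metric.sphere (0 : EuclideanSpace ℝ (Fin N)) 1,
        halfInt s (glue w φ x₀ r) x₀ (y : EuclideanSpace ℝ (Fin N)) := by
      refine ciSup_mono ⟨B, ?_⟩ (fun y => hmono _ (hnorm y))
      rintro _ ⟨y, rfl⟩
      exact (abs_le.1 (auxw _ (hnorm y)).2).2
    have hinf : (⨅ z : Metric.sphere (0 : EuclideanSpace ℝ (Fin N)) 1,
        halfInt s (glue u φ x₀ r) x₀ (-(z : EuclideanSpace ℝ (Fin N)))) ≤
        ⨅ z : Metric.sphere (0 : EuclideanSpace ℝ (Fin N)) 1,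
        halfInt s (glue w φ x₀ r) x₀ (-(z : EuclideanSpace ℝ (Fin N))) := by
      refine ciInf_mono ⟨-B, ?_⟩ (fun z => hmono _ (hnormneg z))
      rintro _ ⟨z, rfl⟩
      exact neg_le.1 (neg_le.2 (abs_le.1 (auxu _ (hnormneg z)).2).1)
    linarith
  · -- nonzero gradient case
    have hpn : ‖p‖ ≠ 0 := norm_ne_zero_iff.2 hp
    set v : EuclideanSpace ℝ (Fin N) := ‖p‖⁻¹ • p with hvdef
    have hv : ‖v‖ = 1 := by
      rw [hvdef, norm_smul, norm_inv, norm_norm, inv_mul_cancel₀ hpn]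
    have hφnear : ∀ x : EuclideanSpace ℝ (Fin N), ‖x‖ < δ →
        |φ (x₀ + x) + φ (x₀ - x) - 2 * φ x₀| ≤ (2*M) * ‖x‖ ^ 2 := by
      intro x hx
      have h1 := hφM x (hx.trans hδη₀)
      have h2 := hφM (-x) (by rw [norm_neg]; exact hx.trans hδη₀)
      rw [← sub_eq_add_neg, inner_neg_right (𝕜 := ℝ), norm_neg, sub_neg_eq_add] at h2
      have hkey : φ (x₀ + x) + φ (x₀ - x) - 2 * φ x₀ =
          (φ (x₀ + x) - φ x₀ - (inner ℝ p x : ℝ)) + (φ (x₀ - x) - φ x₀ + (inner ℝ p x : ℝ)) := by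
        ring
      rw [hkey]
      calc |(φ (x₀ + x) - φ x₀ - (inner ℝ p x : ℝ)) + (φ (x₀ - x) - φ x₀ + (inner ℝ p x : ℝ))|
          ≤ |φ (x₀ + x) - φ x₀ - (inner ℝ p x : ℝ)| + |φ (x₀ - x) - φ x₀ + (inner ℝ p x : ℝ)| :=
            abs_add_le _ _
        _ ≤ M * ‖x‖^2 + M * ‖x‖^2 := add_le_add h1 h2
        _ = (2*M) * ‖x‖^2 := by ring
    have auxu := dirInt_aux s hs hs1 x₀ r δ (2*M) Cφ K hr hδ hδr (by linarith) φ hφc hφb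
      hφnear u hu huK v hv
    have auxw := dirInt_aux s hs hs1 x₀ r δ (2*M) Cφ K hr hδ hδr (by linarith) φ hφc hφb
      hφnear w hw hwK v hv
    simp only [IFL, if_neg hp] at h ⊢
    rw [← hvdef] at h ⊢
    refine le_trans h ?_
    simp only [dirInt]
    refine setIntegral_mono_on auxu auxw measurableSet_Ioi ?_
    intro η hη
    have hpow : (0:ℝ) < η ^ (1+2*s) := Real.rpow_pos_of_pos hη _
    have hnum : glue u φ x₀ r (x₀ + η • v) + glue u φ x₀ r (x₀ - η • v)
        - 2 * glue u φ x₀ r x₀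
        ≤ glue w φ x₀ r (x₀ + η • v) + glue w φ x₀ r (x₀ - η • v)
        - 2 * glue w φ x₀ r x₀ := by
      rw [glue_self u φ x₀ r hr, glue_self w φ x₀ r hr]
      exact sub_le_sub_right (add_le_add (glue_le u w φ x₀ r hle _)
        (glue_le u w φ x₀ r hle _)) _
    exact div_le_div_of_nonneg_right hnum hpow.le


/-- the maximum of two bounded upper semicontinuous viscosity subsolutions
of the infinity fractional Laplacian in an open set `Ω` is again a subsolution. -/
theorem stmt_6 {N : ℕ} (s : ℝ) (hs : 1 / 2 < s) (hs1 : s < 1)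
    (Ω : Set (EuclideanSpace ℝ (Fin N))) (hΩ : IsOpen Ω)
    (u₁ u₂ : EuclideanSpace ℝ (Fin N) → ℝ)
    (h₁usc : UpperSemicontinuous u₁) (h₂usc : UpperSemicontinuous u₂)
    (h₁bdd : ∃ K : ℝ, ∀ x, |u₁ x| ≤ K) (h₂bdd : ∃ K : ℝ, ∀ x, |u₂ x| ≤ K)
    (h₁ : IsSubsol s Ω u₁) (h₂ : IsSubsol s Ω u₂) :
    IsSubsol s Ω (fun x => max (u₁ x) (u₂ x)) := by
  obtain ⟨K₁, hK₁⟩ := h₁bdd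
  obtain ⟨K₂, hK₂⟩ := h₂bdd
  set K : ℝ := max K₁ K₂ with hKdef
  have hu₁K : ∀ x, |u₁ x| ≤ K := fun x => (hK₁ x).trans (le_max_left _ _)
  have hu₂K : ∀ x, |u₂ x| ≤ K := fun x => (hK₂ x).trans (le_max_right _ _)
  have hwK : ∀ x, |max (u₁ x) (u₂ x)| ≤ K := by
    intro x
    rcases max_choice (u₁ x) (u₂ x) with h | h <;> rw [h]
    · exact hu₁K x
    · exact hu₂K x
  have hm₁ : Measurable u₁ := h₁usc.measurable
  have hm₂ : Measurable u₂ := h₂usc.measurable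
  have hmw : Measurable fun x => max (u₁ x) (u₂ x) := hm₁.max hm₂
  intro x₀ hx₀ r hr φ p hC11 hφc hφx₀ htouch
  rcases le_total (u₂ x₀) (u₁ x₀) with hcase | hcase
  · have hmax : max (u₁ x₀) (u₂ x₀) = u₁ x₀ := max_eq_left hcase
    refine key s hs hs1 x₀ r hr φ p hC11 hφc u₁ (fun x => max (u₁ x) (u₂ x))
      hm₁ hmw K hu₁K hwK (fun x => le_max_left _ _) hmax.symm ?_
    refine h₁ x₀ hx₀ r hr φ p hC11 hφc (by rw [hφx₀]; exact hmax) ?_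
    exact fun x hx hne => lt_of_le_of_lt (le_max_left _ _) (htouch x hx hne)
  · have hmax : max (u₁ x₀) (u₂ x₀) = u₂ x₀ := max_eq_right hcase
    refine key s hs hs1 x₀ r hr φ p hC11 hφc u₂ (fun x => max (u₁ x) (u₂ x))
      hm₂ hmw K hu₂K hwK (fun x => le_max_right _ _) hmax.symm ?_
    refine h₂ x₀ hx₀ r hr φ p hC11 hφc (by rw [hφx₀]; exact hmax) ?_
    exact fun x hx hne => lt_of_le_of_lt (le_max_right _ _) (htouch x hx hne)
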